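/- Let u₊, u₋, v₊, v₋ be unitary 2×2 complex matrices, J ∈ ℝ, and let D = (u₊ ⊗ v₊) * V(J) * (u₋ ⊗ v₋) (Kronecker products reindexed to Fin 2 × Fin 2). Then for every a : Matrix (Fin 2) (Fin 2) ℂ, ℳ₋ᴰ(a) = u₋ᴴ * ℳ₋^{V(J)}(v₊ᴴ * a * v₊) * u₋. -/

import Mathlib

open Matrix Complex

/-- Pauli matrix σx. -/
def sigmaX : Matrix (Fin 2) (Fin 2) ℂ := !![0, 1; 1, 0]

/-- Pauli matrix σy. -/
def sigmaY : Matrix (Fin 2) (Fin 2) ℂ := !![0, -I; I, 0]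

/-- Pauli matrix σz. -/
def sigmaZ : Matrix (Fin 2) (Fin 2) ℂ := !![1, 0; 0, -1]

/-- Kronecker product of two `2 × 2` matrices, reindexed to `Fin 2 × Fin 2`. -/
def kron (a b : Matrix (Fin 2) (Fin 2) ℂ) : Matrix (Fin 2 × Fin 2) (Fin 2 × Fin 2) ℂ :=
  Matrix.of fun p q => a p.1 q.1 * b p.2 q.2

/-- The dual unitary gate `V(J) = exp(−i((π/4)(σx⊗σx + σy⊗σy) + J σz⊗σz))`. -/
noncomputable def VJ (J : ℝ) : Matrix (Fin 2 × Fin 2) (Fin 2 × Fin 2) ℂ :=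
  NormedSpace.exp
    (-(I • (((Real.pi / 4 : ℝ) : ℂ) • (kron sigmaX sigmaX + kron sigmaY sigmaY) +
      ((J : ℝ) : ℂ) • kron sigmaZ sigmaZ)))

/-- The single-site map `ℳ₋ᴰ` of a two-site gate `D` on `d`-dimensional sites:
`ℳ₋ᴰ(a)[i,j] = (1/d) ∑_k (Dᴴ (1 ⊗ a) D)[(i,k),(j,k)]`. -/
noncomputable def Mminus {d : ℕ} (D : Matrix (Fin d × Fin d) (Fin d × Fin d) ℂ)
    (a : Matrix (Fin d) (Fin d) ℂ) : Matrix (Fin d) (Fin d) ℂ :=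
  Matrix.of fun i j =>
    (1 / (d : ℂ)) * ∑ k : Fin d,
      (Dᴴ * (Matrix.of fun p q : Fin d × Fin d =>
          (if p.1 = q.1 then (1 : ℂ) else 0) * a p.2 q.2) * D) (i, k) (j, k)

/-- A matrix is unitary if it is inverted by its conjugate transpose on both sides. -/
def IsUnitary {n : Type*} [Fintype n] [DecidableEq n] (M : Matrix n n ℂ) : Prop :=
  M * Mᴴ = 1 ∧ Mᴴ * M = 1


lemma kron_eq' (a b : Matrix (Fin 2) (Fin 2) ℂ) : kron a b = Matrix.kroneckerMap (· * ·) a b := by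
  ext ⟨i,k⟩ ⟨j,l⟩; rfl

lemma kron_mul' (a b c d : Matrix (Fin 2) (Fin 2) ℂ) :
    kron a b * kron c d = kron (a * c) (b * d) := by
  simp [kron_eq', Matrix.mul_kronecker_mul]

lemma kron_conjT' (a b : Matrix (Fin 2) (Fin 2) ℂ) : (kron a b)ᴴ = kron aᴴ bᴴ := by
  ext ⟨i,k⟩ ⟨j,l⟩
  simp [kron, Matrix.conjTranspose_apply, mul_comm]

lemma ptr_conj' (u v : Matrix (Fin 2) (Fin 2) ℂ) (hv : v * vᴴ = 1)
    (Y : Matrix (Fin 2 × Fin 2) (Fin 2 × Fin 2) ℂ) (i j : Fin 2) :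
    ∑ k : Fin 2, ((kron u v)ᴴ * Y * kron u v) (i, k) (j, k) =
      (uᴴ * (Matrix.of fun i j => ∑ k : Fin 2, Y (i, k) (j, k)) * u) i j := by
  have hv' : ∀ b c : Fin 2, ∑ k : Fin 2, v b k * (starRingEnd ℂ) (v c k) = if b = c then 1 else 0 := by
    intro b c
    have := congrFun (congrFun hv b) c
    simpa [Matrix.mul_apply, Matrix.conjTranspose_apply, Matrix.one_apply] using this
  simp only [Matrix.mul_apply, Matrix.conjTranspose_apply, kron, Matrix.of_apply,
    Complex.star_def, Fintype.sum_prod_type, Fin.sum_univ_two]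
  have h00 := hv' 0 0
  have h01 := hv' 0 1
  have h10 := hv' 1 0
  have h11 := hv' 1 1
  simp only [Fin.sum_univ_two] at h00 h01 h10 h11
  norm_num at h00 h01 h10 h11 ⊢
  linear_combination ((starRingEnd ℂ) (u 0 i) * Y (0,0) (0,0) * u 0 j + (starRingEnd ℂ) (u 0 i) * Y (0,0) (1,0) * u 1 j + (starRingEnd ℂ) (u 1 i) * Y (1,0) (0,0) * u 0 j + (starRingEnd ℂ) (u 1 i) * Y (1,0) (1,0) * u 1 j) * h00 + ((starRingEnd ℂ) (u 0 i) * Y (0,1) (0,0) * u 0 j + (starRingEnd ℂ) (u 0 i) * Y (0,1) (1,0) * u 1 j + (starRingEnd ℂ) (u 1 i) * Y (1,1) (0,0) * u 0 j + (starRingEnd ℂ) (u 1 i) * Y (1,1) (1,0) * u 1 j) * h01 + ((starRingEnd ℂ) (u 0 i) * Y (0,0) (0,1) * u 0 j + (starRingEnd ℂ) (u 0 i) * Y (0,0) (1,1) * u 1 j + (starRingEnd ℂ) (u 1 i) * Y (1,0) (0,1) * u 0 j + (starRingEnd ℂ) (u 1 i) * Y (1,0) (1,1) * u 1 j) * h10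 + ((starRingEnd ℂ) (u 0 i) * Y (0,1) (0,1) * u 0 j + (starRingEnd ℂ) (u 0 i) * Y (0,1) (1,1) * u 1 j + (starRingEnd ℂ) (u 1 i) * Y (1,1) (0,1) * u 0 j + (starRingEnd ℂ) (u 1 i) * Y (1,1) (1,1) * u 1 j) * h11

lemma indicator_eq_kron' (b : Matrix (Fin 2) (Fin 2) ℂ) :
    (Matrix.of fun p q : Fin 2 × Fin 2 =>
      (if p.1 = q.1 then (1 : ℂ) else 0) * b p.2 q.2) = kron 1 b := by
  ext ⟨i, k⟩ ⟨j, l⟩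
  simp [kron, Matrix.one_apply]

lemma Mminus_parametrized_aux (uP uM vP vM : Matrix (Fin 2) (Fin 2) ℂ)
    (huP : IsUnitary uP) (hvM : IsUnitary vM)
    (a : Matrix (Fin 2) (Fin 2) ℂ) (V : Matrix (Fin 2 × Fin 2) (Fin 2 × Fin 2) ℂ) :
    Mminus (kron uP vP * V * kron uM vM) a =
      uMᴴ * Mminus V (vPᴴ * a * vP) * uM := by
  have hDconj : (kron uP vP * V * kron uM vM)ᴴ * kron 1 a * (kron uP vP * V * kron uM vM)
      = (kron uM vM)ᴴ * (Vᴴ * kron 1 (vPᴴ * a * vP) * V) * kron uM vM := by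
    have hmid : ∀ X : Matrix (Fin 2 × Fin 2) (Fin 2 × Fin 2) ℂ,
        kron uPᴴ vPᴴ * (kron 1 a * (kron uP vP * X)) = kron 1 (vPᴴ * (a * vP)) * X := by
      intro X
      rw [← Matrix.mul_assoc, ← Matrix.mul_assoc, kron_mul', kron_mul']
      simp [Matrix.mul_one, huP.2, Matrix.mul_assoc]
    rw [Matrix.conjTranspose_mul, Matrix.conjTranspose_mul, kron_conjT', kron_conjT']
    simp only [Matrix.mul_assoc]
    rw [hmid]
  ext i j
  simp only [Mminus, Matrix.of_apply, indicator_eq_kron', hDconj]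
  rw [ptr_conj' uM vM hvM.1]
  simp only [Matrix.mul_apply, Matrix.of_apply, Fin.sum_univ_two]
  ring

/-- For a dual unitary gate in the canonical parametrization
`D = (uP ⊗ vP) V(J) (uM ⊗ vM)`, the single-site map factors through rotations:
`ℳ₋ᴰ(a) = uMᴴ ℳ₋^{V(J)}(vPᴴ a vP) uM`. -/
theorem Mminus_parametrized (uP uM vP vM : Matrix (Fin 2) (Fin 2) ℂ)
    (huP : IsUnitary uP) (huM : IsUnitary uM) (hvP : IsUnitary vP) (hvM : IsUnitary vM)
    (J : ℝ) (a : Matrix (Fin 2) (Fin 2) ℂ) :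
    Mminus (kron uP vP * VJ J * kron uM vM) a =
      uMᴴ * Mminus (VJ J) (vPᴴ * a * vP) * uM :=
  Mminus_parametrized_aux uP uM vP vM huP hvM a (VJ J)
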